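/- Let {a_{ij} : (i,j) ∈ E} be nonnegative reals on a directed graph G, and define the comparison graph H = (V, E') with (i,j) ∈ E' iff there exists k such that i,j ∈ N_k^+ and a_{kj} > 0. If H is strongly connected, then the reparametrized log-likelihood ℓ(θ) = Σ_i Σ_{j∈N_i^+} a_{ij}[θ_j − log Σ_{k∈N_i^+} w_{ik} e^{θ_k}], restricted to {θ : Σ_i θ_i = 0}, is strictly concave: for θ ≠ η in this hyperplane and p ∈ (0,1), ℓ(pθ + (1−p)η) > pℓ(θ) + (1−p)ℓ(η). -/

import Mathlib

open Finset

private lemma exp_combo_le {p u v : ℝ} (hp : 0 ≤ p) (hp1 : p ≤ 1) :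
    Real.exp (p * u + (1 - p) * v) ≤ p * Real.exp u + (1 - p) * Real.exp v := by
  have := convexOn_exp.2 (Set.mem_univ u) (Set.mem_univ v) hp
    (by linarith : (0:ℝ) ≤ 1 - p) (by ring)
  simpa [smul_eq_mul] using this

private lemma exp_combo_lt {p u v : ℝ} (hp : 0 < p) (hp1 : p < 1) (huv : u ≠ v) :
    Real.exp (p * u + (1 - p) * v) < p * Real.exp u + (1 - p) * Real.exp v := by
  have := strictConvexOn_exp.2 (Set.mem_univ u) (Set.mem_univ v) huv hp
    (by linarith : (0:ℝ) < 1 - p) (by ring)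
  simpa [smul_eq_mul] using this

section key

variable {n : ℕ} (s : Finset (Fin n)) (w θ η : Fin n → ℝ)

private lemma sum_exp_pos (hw : ∀ k, 0 < w k) (hs : s.Nonempty) (v : Fin n → ℝ) :
    0 < ∑ k ∈ s, w k * Real.exp (v k) :=
  Finset.sum_pos (fun k _ => mul_pos (hw k) (Real.exp_pos _)) hs

/-- The key decomposition: each term of the mixed sum, shifted by the log-normalizers. -/
private lemma mixed_term_eq (A B : ℝ) {p : ℝ} (k : Fin n) :
    w k * Real.exp (p * θ k + (1 - p) * η k) =
      (w k * Real.exp (p * (θ k - A) + (1 - p) * (η k - B))) *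
        Real.exp (p * A + (1 - p) * B) := by
  rw [mul_assoc, ← Real.exp_add]; ring_nf

private lemma sum_shifted_eq (hw : ∀ k, 0 < w k) (hs : s.Nonempty) {p : ℝ} :
    ∑ k ∈ s, w k * (p * Real.exp (θ k - Real.log (∑ k ∈ s, w k * Real.exp (θ k)))
        + (1 - p) * Real.exp (η k - Real.log (∑ k ∈ s, w k * Real.exp (η k)))) = 1 := by
  set Sθ := ∑ k ∈ s, w k * Real.exp (θ k) with hSθ
  set Sη := ∑ k ∈ s, w k * Real.exp (η k) with hSη
  have hθpos : 0 < Sθ := sum_exp_pos s w hw hs θ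
  have hηpos : 0 < Sη := sum_exp_pos s w hw hs η
  have : ∀ k ∈ s, w k * (p * Real.exp (θ k - Real.log Sθ)
        + (1 - p) * Real.exp (η k - Real.log Sη)) =
      p * (Real.exp (Real.log Sθ))⁻¹ * (w k * Real.exp (θ k))
        + (1 - p) * (Real.exp (Real.log Sη))⁻¹ * (w k * Real.exp (η k)) := by
    intro k _
    rw [Real.exp_sub, Real.exp_sub]
    field_simp
  rw [Finset.sum_congr rfl this, Finset.sum_add_distrib, ← Finset.mul_sum, ← Finset.mul_sum,
    Real.exp_log hθpos, Real.exp_log hηpos, ← hSθ, ← hSη]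
  field_simp
  ring

private lemma key_le (hw : ∀ k, 0 < w k) (hs : s.Nonempty) {p : ℝ} (hp : 0 < p) (hp1 : p < 1) :
    Real.log (∑ k ∈ s, w k * Real.exp (p * θ k + (1 - p) * η k)) ≤
      p * Real.log (∑ k ∈ s, w k * Real.exp (θ k))
        + (1 - p) * Real.log (∑ k ∈ s, w k * Real.exp (η k)) := by
  set A := Real.log (∑ k ∈ s, w k * Real.exp (θ k)) with hA
  set B := Real.log (∑ k ∈ s, w k * Real.exp (η k)) with hB
  have hsum : ∑ k ∈ s, w k * Real.exp (p * θ k + (1 - p) * η k) ≤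
      Real.exp (p * A + (1 - p) * B) := by
    calc ∑ k ∈ s, w k * Real.exp (p * θ k + (1 - p) * η k)
        = (∑ k ∈ s, w k * Real.exp (p * (θ k - A) + (1 - p) * (η k - B))) *
            Real.exp (p * A + (1 - p) * B) := by
          rw [Finset.sum_mul]; exact Finset.sum_congr rfl fun k _ => mixed_term_eq w θ η A B k
      _ ≤ (∑ k ∈ s, w k * (p * Real.exp (θ k - A) + (1 - p) * Real.exp (η k - B))) *
            Real.exp (p * A + (1 - p) * B) := by
          apply mul_le_mul_of_nonneg_right _ (Real.exp_pos _).le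
          refine Finset.sum_le_sum fun k _ => ?_
          exact mul_le_mul_of_nonneg_left (exp_combo_le hp.le hp1.le) (hw k).le
      _ = Real.exp (p * A + (1 - p) * B) := by
          rw [sum_shifted_eq s w θ η hw hs, one_mul]
  calc Real.log (∑ k ∈ s, w k * Real.exp (p * θ k + (1 - p) * η k))
      ≤ Real.log (Real.exp (p * A + (1 - p) * B)) :=
        Real.log_le_log (sum_exp_pos s w hw hs _) hsum
    _ = p * A + (1 - p) * B := Real.log_exp _

private lemma key_lt (hw : ∀ k, 0 < w k)
    (hne : ∃ u ∈ s, ∃ v ∈ s, θ u - η u ≠ θ v - η v) {p : ℝ} (hp : 0 < p) (hp1 : p < 1) :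
    Real.log (∑ k ∈ s, w k * Real.exp (p * θ k + (1 - p) * η k)) <
      p * Real.log (∑ k ∈ s, w k * Real.exp (θ k))
        + (1 - p) * Real.log (∑ k ∈ s, w k * Real.exp (η k)) := by
  obtain ⟨u, hu, v, hv, huv⟩ := hne
  have hs : s.Nonempty := ⟨u, hu⟩
  set A := Real.log (∑ k ∈ s, w k * Real.exp (θ k)) with hA
  set B := Real.log (∑ k ∈ s, w k * Real.exp (η k)) with hB
  -- there is a witness k0 ∈ s with θ k0 - η k0 ≠ A - B
  have hwit : ∃ k0 ∈ s, θ k0 - η k0 ≠ A - B := by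
    by_cases h : θ u - η u = A - B
    · exact ⟨v, hv, fun hv' => huv (h.trans hv'.symm)⟩
    · exact ⟨u, hu, h⟩
  obtain ⟨k0, hk0, hk0ne⟩ := hwit
  have hsum : ∑ k ∈ s, w k * Real.exp (p * θ k + (1 - p) * η k) <
      Real.exp (p * A + (1 - p) * B) := by
    calc ∑ k ∈ s, w k * Real.exp (p * θ k + (1 - p) * η k)
        = (∑ k ∈ s, w k * Real.exp (p * (θ k - A) + (1 - p) * (η k - B))) *
            Real.exp (p * A + (1 - p) * B) := by
          rw [Finset.sum_mul]; exact Finset.sum_congr rfl fun k _ => mixed_term_eq w θ η A B k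
      _ < (∑ k ∈ s, w k * (p * Real.exp (θ k - A) + (1 - p) * Real.exp (η k - B))) *
            Real.exp (p * A + (1 - p) * B) := by
          apply mul_lt_mul_of_pos_right _ (Real.exp_pos _)
          refine Finset.sum_lt_sum
            (fun k _ => mul_le_mul_of_nonneg_left (exp_combo_le hp.le hp1.le) (hw k).le)
            ⟨k0, hk0, ?_⟩
          refine mul_lt_mul_of_pos_left (exp_combo_lt hp hp1 ?_) (hw k0)
          intro h; exact hk0ne (by linarith)
      _ = Real.exp (p * A + (1 - p) * B) := by
          rw [sum_shifted_eq s w θ η hw hs, one_mul]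
  calc Real.log (∑ k ∈ s, w k * Real.exp (p * θ k + (1 - p) * η k))
      < Real.log (Real.exp (p * A + (1 - p) * B)) :=
        Real.log_lt_log (sum_exp_pos s w hw hs _) hsum
    _ = p * A + (1 - p) * B := Real.log_exp _

end key

/-- If the comparison graph induced by nonnegative `{a_{ij}}` is strongly connected, the
reparametrized log-likelihood, restricted to the hyperplane `Σ_i θ_i = 0`, is strictly
concave. -/
theorem loglik_strictly_concave_of_strongly_connected (n : ℕ)
    (N : Fin n → Finset (Fin n)) (w : Fin n → Fin n → ℝ) (a : Fin n → Fin n → ℝ)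
    (hw : ∀ i k, 0 < w i k) (ha : ∀ i j, 0 ≤ a i j)
    (hconn : ∀ i j : Fin n,
      Relation.ReflTransGen (fun u v => ∃ k, u ∈ N k ∧ v ∈ N k ∧ 0 < a k v) i j) :
    let L : (Fin n → ℝ) → ℝ := fun θ =>
      ∑ i, ∑ j ∈ N i, a i j * (θ j - Real.log (∑ k ∈ N i, w i k * Real.exp (θ k)))
    ∀ θ η : Fin n → ℝ, (∑ i, θ i = 0) → (∑ i, η i = 0) → θ ≠ η →
      ∀ p : ℝ, 0 < p → p < 1 →
        p * L θ + (1 - p) * L η < L (p • θ + (1 - p) • η) := by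
  intro L θ η hθ hη hθη p hp hp1
  set mix : Fin n → ℝ := p • θ + (1 - p) • η with hmix
  have hmixk : ∀ k, mix k = p * θ k + (1 - p) * η k := by
    intro k; simp [hmix, smul_eq_mul]
  set f : Fin n → (Fin n → ℝ) → ℝ :=
    fun i v => Real.log (∑ k ∈ N i, w i k * Real.exp (v k)) with hf
  set gap : Fin n → ℝ := fun i => p * f i θ + (1 - p) * f i η - f i mix with hgap
  -- θ - η is not constant
  have hd : ∃ u v : Fin n, θ u - η u ≠ θ v - η v := by
    by_contra h
    push_neg at h
    rcases Nat.eq_zero_or_pos n with hn | hn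
    · exact hθη (funext fun i => absurd i.2 (by omega))
    · set u : Fin n := ⟨0, hn⟩
      have hsum : ∑ i : Fin n, (θ i - η i) = ∑ i : Fin n, (θ u - η u) :=
        Finset.sum_congr rfl fun i _ => h i u
      rw [Finset.sum_sub_distrib, hθ, hη, Finset.sum_const, Finset.card_univ,
        Fintype.card_fin, nsmul_eq_mul] at hsum
      have hc : θ u - η u = 0 := by
        have h0 : (n : ℝ) * (θ u - η u) = 0 := by linarith
        rcases mul_eq_zero.mp h0 with h' | h'
        · exact absurd (Nat.cast_eq_zero.mp h') (by omega)
        · exact h'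
      exact hθη (funext fun i => by have := h i u; linarith)
  -- find a strict index
  have hstrict : ∃ i : Fin n, (∃ j ∈ N i, 0 < a i j) ∧
      ∃ u ∈ N i, ∃ v ∈ N i, θ u - η u ≠ θ v - η v := by
    by_contra h
    push_neg at h
    obtain ⟨u, v, huv⟩ := hd
    have step : ∀ x y : Fin n, (∃ k, x ∈ N k ∧ y ∈ N k ∧ 0 < a k y) →
        θ x - η x = θ y - η y := by
      rintro x y ⟨k, hx, hy, hay⟩
      exact h k ⟨y, hy, hay⟩ x hx y hy
    have hall : ∀ x y : Fin n,
        Relation.ReflTransGen (fun u v => ∃ k, u ∈ N k ∧ v ∈ N k ∧ 0 < a k v) x y →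
        θ x - η x = θ y - η y := by
      intro x y hxy
      induction hxy with
      | refl => rfl
      | tail _ hone ih => exact ih.trans (step _ _ hone)
    exact huv (hall u v (hconn u v))
  obtain ⟨i0, ⟨j0, hj0, haj0⟩, hne0⟩ := hstrict
  -- gap is nonneg everywhere
  have hmixeq : ∀ i : Fin n, f i mix =
      Real.log (∑ k ∈ N i, w i k * Real.exp (p * θ k + (1 - p) * η k)) := by
    intro i
    exact congrArg Real.log (Finset.sum_congr rfl fun k _ => by rw [hmixk])
  have hgap_nonneg : ∀ i : Fin n, 0 ≤ gap i := by
    intro i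
    rcases Finset.eq_empty_or_nonempty (N i) with he | hne
    · have : gap i = 0 := by simp [hgap, hf, he]
      linarith
    · have hkey := key_le (N i) (w i) θ η (hw i) hne hp hp1
      have : gap i = p * f i θ + (1 - p) * f i η - f i mix := rfl
      rw [this, hmixeq i]
      simp only [hf]
      linarith
  -- gap at i0 is positive
  have hgap_pos : 0 < gap i0 := by
    have hkey := key_lt (N i0) (w i0) θ η (hw i0) hne0 hp hp1
    have : gap i0 = p * f i0 θ + (1 - p) * f i0 η - f i0 mix := rfl
    rw [this, hmixeq i0]
    simp only [hf]
    linarith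
  -- the difference identity
  have hiden : L mix - (p * L θ + (1 - p) * L η)
      = ∑ i, (∑ j ∈ N i, a i j) * gap i := by
    simp only [L, Finset.mul_sum, ← Finset.sum_add_distrib, ← Finset.sum_sub_distrib]
    refine Finset.sum_congr rfl fun i _ => ?_
    rw [Finset.sum_mul]
    refine Finset.sum_congr rfl fun j _ => ?_
    simp only [hgap, hf]
    rw [hmixk]
    ring
  have hpos : 0 < ∑ i, (∑ j ∈ N i, a i j) * gap i := by
    refine Finset.sum_pos' (fun i _ => mul_nonneg (Finset.sum_nonneg fun j _ => ha i j)
      (hgap_nonneg i)) ⟨i0, Finset.mem_univ i0, ?_⟩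
    exact mul_pos (lt_of_lt_of_le haj0 (Finset.single_le_sum (fun j _ => ha i0 j) hj0)) hgap_pos
  linarith
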